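/- (Average lemma.) Let ρ : 𝕋³ → ℝ be in L²(𝕋³) with ρ̄ ≠ 0, and let u : 𝕋³ → ℝ³ be continuously differentiable and satisfy ∫_{𝕋³} ρ(x) u(x) dx = 0. Then the Euclidean norm of the average of u satisfies |ū| ≤ (‖ρ − ρ̄‖_{L²(𝕋³)} / |ρ̄|) · ‖∇u‖_{L²(𝕋³)}. (In the paper this is applied along a solution of the inhomogeneous Navier–Stokes system, using that ρ̄(t) = ρ̄₀, ‖ρ(t) − ρ̄(t)‖_{L²} = ‖ρ₀ − ρ̄₀‖_{L²} and ∫ ρ(t)u(t) = ∫ ρ₀u₀ = 0 are conserved.) -/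

import Mathlib

open MeasureTheory
open scoped ENNReal BigOperators

noncomputable section

/-- Euclidean space ℝ³. -/
abbrev E3 : Type := EuclideanSpace ℝ (Fin 3)

/-- The fundamental domain [0,1)³ of the torus 𝕋³ = (ℝ/ℤ)³. -/
def T3 : Set E3 := (WithLp.equiv 2 (Fin 3 → ℝ)) ⁻¹' Set.univ.pi fun _ => Set.Ico (0:ℝ) 1

/-- ℤ³-periodicity: encodes that a function on ℝ³ descends to the torus 𝕋³. -/
def Torus3Periodic {F : Type*} (f : E3 → F) : Prop :=
  ∀ (x : E3) (k : Fin 3 → ℤ),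
    f (x + (WithLp.equiv 2 (Fin 3 → ℝ)).symm (fun i => (k i : ℝ))) = f x

/-- The Haar measure of the torus 𝕋³ (total mass 1), realized as Lebesgue measure
restricted to the fundamental domain. -/
def μT : Measure E3 := volume.restrict T3

/-- The i-th partial derivative of a scalar function on ℝ³. -/
def pd (i : Fin 3) (f : E3 → ℝ) (x : E3) : ℝ :=
  fderiv ℝ f x (EuclideanSpace.single i (1:ℝ))

namespace AvgAux

def zvec (k : Fin 3 → ℤ) : E3 := (WithLp.equiv 2 (Fin 3 → ℝ)).symm (fun i => (k i : ℝ))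

lemma zvec_apply (k : Fin 3 → ℤ) (i : Fin 3) : zvec k i = k i := rfl

def zvecHom : (Fin 3 → ℤ) →+ E3 where
  toFun := zvec
  map_zero' := by ext i; simp [zvec]
  map_add' := fun a b => by
    ext i
    show ((a + b : Fin 3 → ℤ) i : ℝ) = (a i : ℝ) + (b i : ℝ)
    rw [Pi.add_apply]; push_cast; ring

def lat : AddSubgroup E3 := zvecHom.range

instance : Countable ↥lat :=
  (Set.countable_range zvecHom).to_subtype


instance : MeasurableVAdd ↥lat E3 where
  measurable_const_vadd c := by
    have : Measurable fun x : E3 => (c : E3) + x := measurable_const_add _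
    exact this
  measurable_vadd_const x := by
    have : Measurable fun c : ↥lat => (c : E3) + x :=
      (measurable_subtype_coe).add_const x
    exact this

instance : VAddInvariantMeasure ↥lat E3 volume :=
  ⟨fun c s hs => by
    have : ((fun x : E3 => c +ᵥ x) ⁻¹' s) = ((fun x : E3 => (c : E3) + x) ⁻¹' s) := rfl
    rw [this, measure_preimage_add]⟩

def cube (t : E3) : Set E3 := {x : E3 | ∀ i, x i ∈ Set.Ico (t i) (t i + 1)}

lemma T3_eq : T3 = cube 0 := by
  ext x
  simp only [T3, cube, Set.mem_preimage, WithLp.equiv_apply, Set.mem_pi, Set.mem_univ, forall_true_left, Set.mem_setOf_eq]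
  constructor
  · intro h i; simpa using h i
  · intro h i; simpa using h i

lemma measurable_coord (i : Fin 3) : Measurable fun x : E3 => x i :=
  (measurable_pi_apply i).comp ((MeasurableEquiv.toLp 2 (Fin 3 → ℝ)).symm).measurable

lemma measurableSet_cube (t : E3) : MeasurableSet (cube t) := by
  have : cube t = ⋂ i, (fun x : E3 => x i) ⁻¹' Set.Ico (t i) (t i + 1) := by
    ext x; simp [cube]
  rw [this]
  exact MeasurableSet.iInter fun i => (measurable_coord i) measurableSet_Ico

lemma isFD (t : E3) : IsAddFundamentalDomain ↥lat (cube t) volume := by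
  apply IsAddFundamentalDomain.mk' (measurableSet_cube t).nullMeasurableSet
  intro x
  have h1 : ∀ i, ∃! m : ℤ, x i + m • (1:ℝ) ∈ Set.Ico (t i) (t i + 1) := fun i =>
    existsUnique_add_zsmul_mem_Ico one_pos (x i) (t i)
  choose k hk uk using h1
  refine ⟨⟨zvec k, ⟨k, rfl⟩⟩, ?_, ?_⟩
  · intro i
    have h2 : ((⟨zvec k, ⟨k, rfl⟩⟩ : ↥lat) +ᵥ x) i = (k i : ℝ) + x i := rfl
    rw [h2]
    have := hk i
    simp only [zsmul_eq_mul, mul_one] at this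
    simp only [Set.mem_Ico]
    constructor <;> [linarith [this.1]; linarith [this.2]]
  · rintro ⟨-, k', rfl⟩ hmem
    have hk' : ∀ i, k' i = k i := by
      intro i
      apply uk i
      have h2 : ((⟨zvecHom k', ⟨k', rfl⟩⟩ : ↥lat) +ᵥ x) i = (k' i : ℝ) + x i := rfl
      have := hmem i
      rw [h2] at this
      simpa [zsmul_eq_mul, add_comm] using this
    have hkk : k' = k := funext hk'
    subst hkk
    rfl

lemma volume_cube (t : E3) : volume (cube t) = 1 := by
  have hset : cube t = ((MeasurableEquiv.toLp 2 (Fin 3 → ℝ)).symm) ⁻¹'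
      (Set.univ.pi fun i => Set.Ico (t i) (t i + 1)) := by
    ext x
    simp only [cube, Set.mem_preimage, Set.mem_pi, Set.mem_univ, forall_true_left,
      Set.mem_setOf_eq]
    rfl
  rw [hset, (EuclideanSpace.volume_preserving_symm_measurableEquiv_toLp (Fin 3)).measure_preimage
    (MeasurableSet.univ_pi fun i => measurableSet_Ico).nullMeasurableSet]
  rw [volume_pi_pi]
  simp [Real.volume_Ico]

lemma volume_T3 : volume T3 = 1 := by rw [T3_eq]; exact volume_cube 0

instance : IsProbabilityMeasure μT := by
  constructor
  rw [μT, Measure.restrict_apply_univ]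
  exact volume_T3

lemma periodic_vadd {F : Type*} (f : E3 → F) (hf : Torus3Periodic f) :
    ∀ (g : ↥lat) (x : E3), f (g +ᵥ x) = f x := by
  rintro ⟨-, k, rfl⟩ x
  have : (⟨zvecHom k, ⟨k, rfl⟩⟩ : ↥lat) +ᵥ x = x + zvec k := by
    show zvecHom k + x = x + zvec k
    exact add_comm _ _
  rw [this]
  exact hf x k

lemma setIntegral_cube_translate {F : Type*} [NormedAddCommGroup F] [NormedSpace ℝ F]
    (f : E3 → F) (hf : Torus3Periodic f) (a c : E3) :
    ∫ x in cube a, f (x + c) = ∫ x in T3, f x := by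
  have h1 : ∫ x in cube a, f (x + c) = ∫ y in (fun x : E3 => x + c) '' (cube a), f y :=
    ((measurePreserving_add_right volume c).setIntegral_image_emb
      (MeasurableEquiv.addRight (c : E3)).measurableEmbedding f (cube a)).symm
  have h2 : (fun x : E3 => x + c) '' (cube a) = cube (a + c) := by
    ext y
    simp only [Set.mem_image, cube, Set.mem_setOf_eq, Set.mem_Ico]
    constructor
    · rintro ⟨x, hx, rfl⟩ i
      have hxi := hx i
      have : (x + c) i = x i + c i := rfl
      have hac : (a + c) i = a i + c i := rfl
      rw [this, hac]
      constructor <;> [linarith [hxi.1]; linarith [hxi.2]]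
    · intro hy
      refine ⟨y - c, fun i => ?_, by abel⟩
      have hyi := hy i
      have h3 : (y - c) i = y i - c i := rfl
      have hac : (a + c) i = a i + c i := rfl
      rw [hac] at hyi
      rw [h3]
      constructor <;> [linarith [hyi.1]; linarith [hyi.2]]
  rw [h1, h2, T3_eq]
  exact (isFD (a + c)).setIntegral_eq (isFD 0) (periodic_vadd f hf)


def negHalf : E3 := (WithLp.equiv 2 (Fin 3 → ℝ)).symm (fun _ => (-(1/2) : ℝ))

def Hset : Set E3 := cube negHalf

def μH : Measure E3 := volume.restrict Hset

def μI : Measure ℝ := volume.restrict (Set.Ioc (0:ℝ) 1)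

instance : IsProbabilityMeasure μH := by
  constructor
  rw [μH, Measure.restrict_apply_univ]
  exact volume_cube negHalf

instance : IsProbabilityMeasure μI := by
  constructor
  rw [μI, Measure.restrict_apply_univ, Real.volume_Ioc]
  norm_num

lemma sq_integral_le {α : Type*} [MeasurableSpace α] {μ : Measure α} [IsProbabilityMeasure μ]
    {g : α → ℝ} (hg : Integrable g μ) (hg2 : Integrable (fun x => g x ^ 2) μ) :
    (∫ x, g x ∂μ) ^ 2 ≤ ∫ x, g x ^ 2 ∂μ := by
  set m := ∫ x, g x ∂μ with hm
  have h0 : 0 ≤ ∫ x, (g x - m) ^ 2 ∂μ := integral_nonneg fun x => sq_nonneg _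
  have hexp : ∫ x, (g x - m) ^ 2 ∂μ = (∫ x, g x ^ 2 ∂μ) - m ^ 2 := by
    have hptw : ∀ x, (g x - m) ^ 2 = g x ^ 2 - (2 * m) * g x + m ^ 2 := fun x => by ring
    simp_rw [hptw]
    have hi1 : Integrable (fun x => g x ^ 2 - (2 * m) * g x) μ := hg2.sub (hg.const_mul (2 * m))
    rw [integral_add hi1 (integrable_const _),
      integral_sub hg2 (hg.const_mul (2 * m)), integral_const_mul]
    simp only [integral_const, measure_univ, probReal_univ, ENNReal.toReal_one, smul_eq_mul, one_mul, ← hm]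
    ring
  linarith

lemma normsq_eq (x : E3) : ‖x‖ ^ 2 = ∑ i, x i ^ 2 := by
  rw [EuclideanSpace.norm_eq, Real.sq_sqrt (by positivity)]
  congr 1
  funext i
  rw [Real.norm_eq_abs, sq_abs]

lemma norm_le_of_coord {x : E3} {M : ℝ} (hM : 0 ≤ M) (h : ∀ i, |x i| ≤ M) : ‖x‖ ≤ 2 * M := by
  have h1 : ‖x‖ ^ 2 ≤ (2 * M) ^ 2 := by
    rw [normsq_eq]
    have : ∀ i : Fin 3, x i ^ 2 ≤ M ^ 2 := fun i =>
      sq_le_sq' (by linarith [(abs_le.mp (h i)).1]) (abs_le.mp (h i)).2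
    calc ∑ i, x i ^ 2 ≤ ∑ _i : Fin 3, M ^ 2 := Finset.sum_le_sum fun i _ => this i
    _ = 3 * M ^ 2 := by rw [Fin.sum_univ_three]; ring
    _ ≤ (2 * M) ^ 2 := by nlinarith
  exact (pow_le_pow_iff_left₀ (norm_nonneg x) (by linarith) (by norm_num)).mp h1

lemma mem_T3_coord {x : E3} (hx : x ∈ T3) (i : Fin 3) : x i ∈ Set.Ico (0:ℝ) 1 := by
  rw [T3_eq] at hx
  simpa using hx i

lemma mem_Hset_coord {h : E3} (hh : h ∈ Hset) (i : Fin 3) :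
    h i ∈ Set.Ico (-(1/2) : ℝ) (1/2) := by
  have := hh i
  have h1 : negHalf i = -(1/2) := rfl
  rw [h1] at this
  rw [show -(1/2) + (1:ℝ) = 1/2 by norm_num] at this
  exact this

lemma norm_Hset_le {h : E3} (hh : h ∈ Hset) : ‖h‖ ≤ 1 := by
  have := norm_le_of_coord (M := 1/2) (by norm_num) (fun i => by
    have := mem_Hset_coord hh i
    rw [abs_le]; exact ⟨this.1, le_of_lt this.2⟩)
  linarith

lemma normsq_Hset_le {h : E3} (hh : h ∈ Hset) : ‖h‖ ^ 2 ≤ 3/4 := by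
  rw [normsq_eq]
  have : ∀ i : Fin 3, h i ^ 2 ≤ (1/2) ^ 2 := fun i => by
    have := mem_Hset_coord hh i
    exact sq_le_sq' (by linarith [this.1]) (le_of_lt this.2)
  calc ∑ i, h i ^ 2 ≤ ∑ _i : Fin 3, ((1:ℝ)/2) ^ 2 := Finset.sum_le_sum fun i _ => this i
  _ = 3/4 := by rw [Fin.sum_univ_three]; norm_num

lemma norm_T3_le {x : E3} (hx : x ∈ T3) : ‖x‖ ≤ 2 := by
  have := norm_le_of_coord (M := 1) (by norm_num) (fun i => by
    have := mem_T3_coord hx i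
    rw [abs_le]; constructor <;> [linarith [this.1]; linarith [this.2]])
  linarith

lemma fderiv_periodic (u : E3 → E3) (hu : Differentiable ℝ u) (huper : Torus3Periodic u) :
    Torus3Periodic (fderiv ℝ u) := by
  intro x k
  show fderiv ℝ u (x + zvec k) = fderiv ℝ u x
  have hfun : (fun y => u (y + zvec k)) = u := funext fun y => huper y k
  have H : HasFDerivAt (fun y => u (y + zvec k)) (fderiv ℝ u (x + zvec k)) x := by
    have h1 := (hu (x + zvec k)).hasFDerivAt
    have h2 : HasFDerivAt (fun y : E3 => y + zvec k) (ContinuousLinearMap.id ℝ E3) x :=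
      (hasFDerivAt_id x).add_const (zvec k)
    have := h1.comp x h2; rw [ContinuousLinearMap.comp_id] at this; exact this
  rw [hfun] at H
  exact H.fderiv.symm


lemma step3 (u : E3 → E3) (hu : ContDiff ℝ 1 u) (x h : E3) :
    ‖u x - u (x + h)‖ ^ 2 ≤ ‖h‖ ^ 2 * ∫ t, ‖fderiv ℝ u (x + t • h)‖ ^ 2 ∂μI := by
  have hcontD : Continuous (fderiv ℝ u) := hu.continuous_fderiv one_ne_zero
  have hpath : Continuous fun t : ℝ => x + t • h :=
    continuous_const.add (continuous_id.smul continuous_const)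
  have hgc : Continuous fun t : ℝ => ‖fderiv ℝ u (x + t • h)‖ :=
    (hcontD.comp hpath).norm
  have hder : ∀ t : ℝ, HasDerivAt (fun s : ℝ => u (x + s • h))
      ((fderiv ℝ u (x + t • h)) h) t := by
    intro t
    have h1 : HasDerivAt (fun s : ℝ => s • h) ((1:ℝ) • h) t := (hasDerivAt_id t).smul_const h
    have h2 : HasDerivAt (fun s : ℝ => x + s • h) ((1:ℝ) • h) t := h1.const_add x
    rw [one_smul] at h2
    exact ((hu.differentiable one_ne_zero) (x + t • h)).hasFDerivAt.comp_hasDerivAt t h2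
  have hint : IntervalIntegrable (fun t : ℝ => (fderiv ℝ u (x + t • h)) h) volume 0 1 :=
    (Continuous.clm_apply (hcontD.comp hpath) continuous_const).intervalIntegrable 0 1
  have hFTC : ∫ t in (0:ℝ)..1, (fderiv ℝ u (x + t • h)) h = u (x + h) - u x := by
    rw [intervalIntegral.integral_eq_sub_of_hasDerivAt (fun t _ => hder t) hint]
    norm_num
  have hA : ‖u (x + h) - u x‖ ≤ (∫ t, ‖fderiv ℝ u (x + t • h)‖ ∂μI) * ‖h‖ := by
    rw [← hFTC]
    calc ‖∫ t in (0:ℝ)..1, (fderiv ℝ u (x + t • h)) h‖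
        ≤ ∫ t in (0:ℝ)..1, ‖(fderiv ℝ u (x + t • h)) h‖ :=
          intervalIntegral.norm_integral_le_integral_norm zero_le_one
      _ ≤ ∫ t in (0:ℝ)..1, ‖fderiv ℝ u (x + t • h)‖ * ‖h‖ := by
          apply intervalIntegral.integral_mono_on zero_le_one
          · exact (Continuous.clm_apply (hcontD.comp hpath) continuous_const).norm.intervalIntegrable 0 1
          · exact (hgc.mul continuous_const).intervalIntegrable 0 1
          · intro t _
            exact ContinuousLinearMap.le_opNorm _ h
      _ = ∫ t, ‖fderiv ℝ u (x + t • h)‖ * ‖h‖ ∂μI := by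
          rw [intervalIntegral.integral_of_le zero_le_one]; rfl
      _ = (∫ t, ‖fderiv ℝ u (x + t • h)‖ ∂μI) * ‖h‖ := by rw [integral_mul_const]
  have hgint : Integrable (fun t => ‖fderiv ℝ u (x + t • h)‖) μI := by
    have : IntegrableOn (fun t => ‖fderiv ℝ u (x + t • h)‖) (Set.Ioc (0:ℝ) 1) volume :=
      hgc.integrableOn_Ioc
    exact this
  have hg2int : Integrable (fun t => ‖fderiv ℝ u (x + t • h)‖ ^ 2) μI := by
    have : IntegrableOn (fun t => ‖fderiv ℝ u (x + t • h)‖ ^ 2) (Set.Ioc (0:ℝ) 1) volume :=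
      (hgc.pow 2).integrableOn_Ioc
    exact this
  have hCS : (∫ t, ‖fderiv ℝ u (x + t • h)‖ ∂μI) ^ 2
      ≤ ∫ t, ‖fderiv ℝ u (x + t • h)‖ ^ 2 ∂μI := sq_integral_le hgint hg2int
  calc ‖u x - u (x + h)‖ ^ 2 = ‖u (x + h) - u x‖ ^ 2 := by rw [norm_sub_rev]
    _ ≤ ((∫ t, ‖fderiv ℝ u (x + t • h)‖ ∂μI) * ‖h‖) ^ 2 := by
        apply pow_le_pow_left₀ (norm_nonneg _) hA
    _ = ‖h‖ ^ 2 * (∫ t, ‖fderiv ℝ u (x + t • h)‖ ∂μI) ^ 2 := by ring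
    _ ≤ ‖h‖ ^ 2 * ∫ t, ‖fderiv ℝ u (x + t • h)‖ ^ 2 ∂μI := by
        exact mul_le_mul_of_nonneg_left hCS (sq_nonneg _)


lemma measurableSet_T3 : MeasurableSet T3 := by rw [T3_eq]; exact measurableSet_cube 0

lemma fderiv_norm_sq_periodic (u : E3 → E3) (hu : ContDiff ℝ 1 u) (huper : Torus3Periodic u) :
    Torus3Periodic (fun y => ‖fderiv ℝ u y‖ ^ 2) := by
  intro y k
  have := fderiv_periodic u (hu.differentiable one_ne_zero) huper y k
  simp only [this]

set_option maxHeartbeats 1000000 in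
lemma poincare (u : E3 → E3) (hu : ContDiff ℝ 1 u) (huper : Torus3Periodic u) :
    ∫ x, ‖u x - ∫ y in T3, u y‖ ^ 2 ∂μT ≤ ∫ x, ‖fderiv ℝ u x‖ ^ 2 ∂μT := by
  have hcontu : Continuous u := hu.continuous
  have hcontD : Continuous (fderiv ℝ u) := hu.continuous_fderiv one_ne_zero
  -- bounds on the closed ball of radius 9
  obtain ⟨C0, hC0⟩ := (isCompact_closedBall (0:E3) 9).exists_bound_of_continuousOn
    hcontD.continuousOn
  obtain ⟨Cu0, hCu0⟩ := (isCompact_closedBall (0:E3) 9).exists_bound_of_continuousOn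
    hcontu.continuousOn
  set C : ℝ := max C0 0 with hCdef
  set Cu : ℝ := max Cu0 0 with hCudef
  have hC : ∀ y ∈ Metric.closedBall (0:E3) 9, ‖fderiv ℝ u y‖ ≤ C :=
    fun y hy => le_trans (hC0 y hy) (le_max_left _ _)
  have hCu : ∀ y ∈ Metric.closedBall (0:E3) 9, ‖u y‖ ≤ Cu :=
    fun y hy => le_trans (hCu0 y hy) (le_max_left _ _)
  have hCnn : 0 ≤ C := le_max_right _ _
  have hCunn : 0 ≤ Cu := le_max_right _ _
  -- membership facts
  have hmem : ∀ {x h : E3} {t : ℝ}, x ∈ T3 → h ∈ Hset → |t| ≤ 1 →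
      x + t • h ∈ Metric.closedBall (0:E3) 9 := by
    intro x h t hx hh ht
    rw [mem_closedBall_zero_iff]
    calc ‖x + t • h‖ ≤ ‖x‖ + ‖t • h‖ := norm_add_le _ _
      _ ≤ 2 + |t| * ‖h‖ := by
          rw [norm_smul, Real.norm_eq_abs]
          exact add_le_add (norm_T3_le hx) (mul_le_mul_of_nonneg_left (le_refl _) (abs_nonneg t))
      _ ≤ 9 := by
          have h1 := norm_Hset_le hh
          have h2 : |t| * ‖h‖ ≤ 1 * 1 :=
            mul_le_mul ht h1 (norm_nonneg _) zero_le_one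
          linarith
  set Ψ : E3 × (E3 × ℝ) → ℝ :=
    fun p => ‖p.2.1‖ ^ 2 * ‖fderiv ℝ u (p.1 + p.2.2 • p.2.1)‖ ^ 2 with hΨdef
  have hΨc : Continuous Ψ := by
    apply Continuous.mul
    · exact (continuous_snd.fst.norm).pow 2
    · exact ((hcontD.comp (continuous_fst.add
        ((continuous_snd.snd).smul continuous_snd.fst))).norm).pow 2
  have hSmeas : MeasurableSet (Hset ×ˢ Set.Ioc (0:ℝ) 1) :=
    (measurableSet_cube negHalf).prod measurableSet_Ioc
  have hprodHI : μH.prod μI = (volume.prod volume).restrict (Hset ×ˢ Set.Ioc (0:ℝ) 1) := by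
    rw [μH, μI, Measure.prod_restrict]
  have hbig : μT.prod (μH.prod μI)
      = (volume.prod (volume.prod volume)).restrict (T3 ×ˢ (Hset ×ˢ Set.Ioc (0:ℝ) 1)) := by
    rw [μT, μH, μI, Measure.prod_restrict, Measure.prod_restrict]
  have hTSmeas : MeasurableSet (T3 ×ˢ (Hset ×ˢ Set.Ioc (0:ℝ) 1)) := measurableSet_T3.prod hSmeas
  have hΨbound : ∀ {x h : E3} {t : ℝ}, x ∈ T3 → h ∈ Hset → t ∈ Set.Ioc (0:ℝ) 1 →
      ‖Ψ (x, (h, t))‖ ≤ C ^ 2 := by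
    intro x h t hx hh ht
    have habs : |t| ≤ 1 := by rw [abs_le]; exact ⟨by linarith [ht.1], ht.2⟩
    have h1 : ‖fderiv ℝ u (x + t • h)‖ ≤ C := hC _ (hmem hx hh habs)
    have h2 : ‖h‖ ^ 2 ≤ 1 := by have := norm_Hset_le hh; nlinarith [norm_nonneg h]
    have h3 : (0:ℝ) ≤ ‖fderiv ℝ u (x + t • h)‖ := norm_nonneg _
    rw [Real.norm_eq_abs, abs_of_nonneg (by positivity)]
    calc Ψ (x, (h, t)) = ‖h‖ ^ 2 * ‖fderiv ℝ u (x + t • h)‖ ^ 2 := rfl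
      _ ≤ 1 * C ^ 2 := mul_le_mul h2 (by nlinarith) (by positivity) zero_le_one
      _ = C ^ 2 := one_mul _
  have hΨint : Integrable Ψ (μT.prod (μH.prod μI)) := by
    refine Integrable.mono' (integrable_const (C ^ 2)) hΨc.aestronglyMeasurable ?_
    rw [hbig]
    filter_upwards [ae_restrict_mem hTSmeas] with p hp
    exact hΨbound hp.1 hp.2.1 hp.2.2
  have hΨxint : ∀ {x : E3}, x ∈ T3 → Integrable (fun p : E3 × ℝ => Ψ (x, p)) (μH.prod μI) := by
    intro x hx
    refine Integrable.mono' (integrable_const (C ^ 2))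
      ((hΨc.comp (Continuous.prodMk_right x)).aestronglyMeasurable) ?_
    rw [hprodHI]
    filter_upwards [ae_restrict_mem hSmeas] with p hp
    exact hΨbound hx hp.1 hp.2
  have key : ∀ x ∈ T3, ‖u x - ∫ y in T3, u y‖ ^ 2 ≤ ∫ p, Ψ (x, p) ∂(μH.prod μI) := by
    intro x hx
    have hxball : ∀ {h : E3}, h ∈ Hset → x + h ∈ Metric.closedBall (0:E3) 9 := by
      intro h hh
      have := hmem hx hh (le_of_eq abs_one)
      rwa [one_smul] at this
    have hux_int : Integrable (fun h => u (x + h)) μH := by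
      refine Integrable.mono' (integrable_const Cu)
        ((hcontu.comp (continuous_const.add continuous_id)).aestronglyMeasurable) ?_
      rw [μH]
      filter_upwards [ae_restrict_mem (measurableSet_cube negHalf)] with h hh
      exact hCu _ (hxball hh)
    have hmean : ∫ h, u (x + h) ∂μH = ∫ y in T3, u y := by
      calc ∫ h, u (x + h) ∂μH = ∫ h in Hset, u (h + x) := by
            rw [μH]
            exact integral_congr_ae (Filter.Eventually.of_forall fun h =>
              congrArg u (add_comm x h))
        _ = ∫ y in T3, u y := setIntegral_cube_translate u huper negHalf x
    have hvx : u x - (∫ y in T3, u y) = ∫ h, (u x - u (x + h)) ∂μH := by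
      rw [integral_sub (integrable_const (u x)) hux_int, integral_const, hmean]
      simp [measure_univ]
    have hnc : Continuous fun h : E3 => ‖u x - u (x + h)‖ :=
      (continuous_const.sub (hcontu.comp (continuous_const.add continuous_id))).norm
    have hbnd : ∀ {h : E3}, h ∈ Hset → ‖u x - u (x + h)‖ ≤ ‖u x‖ + Cu := by
      intro h hh
      calc ‖u x - u (x + h)‖ ≤ ‖u x‖ + ‖u (x + h)‖ := norm_sub_le _ _
        _ ≤ ‖u x‖ + Cu := add_le_add_right (hCu _ (hxball hh)) _
    have hni : Integrable (fun h => ‖u x - u (x + h)‖) μH := by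
      refine Integrable.mono' (integrable_const (‖u x‖ + Cu)) hnc.aestronglyMeasurable ?_
      rw [μH]
      filter_upwards [ae_restrict_mem (measurableSet_cube negHalf)] with h hh
      rw [Real.norm_eq_abs, abs_of_nonneg (norm_nonneg _)]
      exact hbnd hh
    have hni2 : Integrable (fun h => ‖u x - u (x + h)‖ ^ 2) μH := by
      refine Integrable.mono' (integrable_const ((‖u x‖ + Cu) ^ 2))
        (hnc.pow 2).aestronglyMeasurable ?_
      rw [μH]
      filter_upwards [ae_restrict_mem (measurableSet_cube negHalf)] with h hh
      rw [Real.norm_eq_abs, abs_of_nonneg (by positivity)]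
      have := hbnd hh
      nlinarith [norm_nonneg (u x - u (x + h)), norm_nonneg (u x), hCunn]
    have h2 : ‖u x - ∫ y in T3, u y‖ ^ 2 ≤ ∫ h, ‖u x - u (x + h)‖ ^ 2 ∂μH := by
      have hb : ‖u x - ∫ y in T3, u y‖ ≤ ∫ h, ‖u x - u (x + h)‖ ∂μH := by
        rw [hvx]
        exact norm_integral_le_integral_norm _
      calc ‖u x - ∫ y in T3, u y‖ ^ 2 ≤ (∫ h, ‖u x - u (x + h)‖ ∂μH) ^ 2 :=
            pow_le_pow_left₀ (norm_nonneg _) hb 2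
        _ ≤ ∫ h, ‖u x - u (x + h)‖ ^ 2 ∂μH := sq_integral_le hni hni2
    have hrw : ∀ h : E3, ‖h‖ ^ 2 * (∫ t, ‖fderiv ℝ u (x + t • h)‖ ^ 2 ∂μI)
        = ∫ t, Ψ (x, (h, t)) ∂μI := fun h => (integral_const_mul _ _).symm
    have h3 : ∫ h, ‖u x - u (x + h)‖ ^ 2 ∂μH ≤ ∫ h, (∫ t, Ψ (x, (h, t)) ∂μI) ∂μH := by
      refine integral_mono hni2 ((hΨxint hx).integral_prod_left) (fun h => ?_)
      rw [← hrw h]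
      exact step3 u hu x h
    have h4 : ∫ h, (∫ t, Ψ (x, (h, t)) ∂μI) ∂μH = ∫ p, Ψ (x, p) ∂(μH.prod μI) :=
      (integral_prod _ (hΨxint hx)).symm
    exact le_trans h2 (le_trans h3 (le_of_eq h4))
  have hvint : Integrable (fun x => ‖u x - ∫ y in T3, u y‖ ^ 2) μT := by
    have hc : Continuous fun x : E3 => ‖u x - ∫ y in T3, u y‖ ^ 2 :=
      ((hcontu.sub continuous_const).norm).pow 2
    refine Integrable.mono' (integrable_const ((Cu + ‖∫ y in T3, u y‖) ^ 2))
      hc.aestronglyMeasurable ?_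
    rw [μT]
    filter_upwards [ae_restrict_mem measurableSet_T3] with x hx
    have hxb : ‖u x‖ ≤ Cu := by
      refine hCu _ ?_
      rw [mem_closedBall_zero_iff]
      linarith [norm_T3_le hx]
    have h1 : ‖u x - ∫ y in T3, u y‖ ≤ Cu + ‖∫ y in T3, u y‖ := by
      calc ‖u x - ∫ y in T3, u y‖ ≤ ‖u x‖ + ‖∫ y in T3, u y‖ := norm_sub_le _ _
        _ ≤ Cu + ‖∫ y in T3, u y‖ := by linarith
    rw [Real.norm_eq_abs, abs_of_nonneg (by positivity)]
    nlinarith [norm_nonneg (u x - ∫ y in T3, u y), norm_nonneg (∫ y in T3, u y), hCunn]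
  have hGint : Integrable (fun x => ∫ p, Ψ (x, p) ∂(μH.prod μI)) μT :=
    hΨint.integral_prod_left
  have hmono : ∫ x, ‖u x - ∫ y in T3, u y‖ ^ 2 ∂μT
      ≤ ∫ x, (∫ p, Ψ (x, p) ∂(μH.prod μI)) ∂μT := by
    refine integral_mono_ae hvint hGint ?_
    rw [μT]
    filter_upwards [ae_restrict_mem measurableSet_T3] with x hx
    exact key x hx
  have hswap : ∫ x, (∫ p, Ψ (x, p) ∂(μH.prod μI)) ∂μT
      = ∫ p, (∫ x, Ψ (x, p) ∂μT) ∂(μH.prod μI) := integral_integral_swap hΨint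
  have hinner : ∀ p : E3 × ℝ, ∫ x, Ψ (x, p) ∂μT
      = ‖p.1‖ ^ 2 * ∫ x, ‖fderiv ℝ u x‖ ^ 2 ∂μT := by
    intro p
    have hper2 := fderiv_norm_sq_periodic u hu huper
    have htrans : ∫ x in cube 0, ‖fderiv ℝ u (x + p.2 • p.1)‖ ^ 2
        = ∫ x in T3, ‖fderiv ℝ u x‖ ^ 2 :=
      setIntegral_cube_translate (fun y => ‖fderiv ℝ u y‖ ^ 2) hper2 0 (p.2 • p.1)
    calc ∫ x, Ψ (x, p) ∂μT = ∫ x, ‖p.1‖ ^ 2 * ‖fderiv ℝ u (x + p.2 • p.1)‖ ^ 2 ∂μT := rfl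
      _ = ‖p.1‖ ^ 2 * ∫ x, ‖fderiv ℝ u (x + p.2 • p.1)‖ ^ 2 ∂μT := integral_const_mul _ _
      _ = ‖p.1‖ ^ 2 * ∫ x, ‖fderiv ℝ u x‖ ^ 2 ∂μT := by
          congr 1
          have hμ : μT = volume.restrict (cube 0) := by rw [μT, T3_eq]
          rw [hμ, htrans, T3_eq]
  have hfinal : ∫ p, (∫ x, Ψ (x, p) ∂μT) ∂(μH.prod μI) ≤ ∫ x, ‖fderiv ℝ u x‖ ^ 2 ∂μT := by
    set N2 := ∫ x, ‖fderiv ℝ u x‖ ^ 2 ∂μT with hN2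
    have hN2nn : 0 ≤ N2 := integral_nonneg fun x => sq_nonneg _
    have hintegrand : Integrable (fun p : E3 × ℝ => ‖p.1‖ ^ 2 * N2) (μH.prod μI) := by
      refine Integrable.mono' (integrable_const N2)
        ((((continuous_fst.norm).pow 2).mul continuous_const)).aestronglyMeasurable ?_
      rw [hprodHI]
      filter_upwards [ae_restrict_mem hSmeas] with p hp
      have h2 : ‖p.1‖ ^ 2 ≤ 1 := by have := norm_Hset_le hp.1; nlinarith [norm_nonneg p.1]
      rw [Real.norm_eq_abs, abs_of_nonneg (by positivity)]
      nlinarith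
    calc ∫ p, (∫ x, Ψ (x, p) ∂μT) ∂(μH.prod μI)
        = ∫ p : E3 × ℝ, ‖p.1‖ ^ 2 * N2 ∂(μH.prod μI) :=
          integral_congr_ae (Filter.Eventually.of_forall hinner)
      _ ≤ ∫ _p : E3 × ℝ, N2 ∂(μH.prod μI) := by
          refine integral_mono_ae hintegrand (integrable_const N2) ?_
          rw [hprodHI]
          filter_upwards [ae_restrict_mem hSmeas] with p hp
          have h2 : ‖p.1‖ ^ 2 ≤ 1 := by have := norm_Hset_le hp.1; nlinarith [norm_nonneg p.1]
          nlinarith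
      _ = N2 := by simp [measure_univ]
  calc ∫ x, ‖u x - ∫ y in T3, u y‖ ^ 2 ∂μT
      ≤ ∫ x, (∫ p, Ψ (x, p) ∂(μH.prod μI)) ∂μT := hmono
    _ = ∫ p, (∫ x, Ψ (x, p) ∂μT) ∂(μH.prod μI) := hswap
    _ ≤ ∫ x, ‖fderiv ℝ u x‖ ^ 2 ∂μT := hfinal


lemma integrable_cont_T3 {F : Type*} [NormedAddCommGroup F] (f : E3 → F) (hf : Continuous f) :
    Integrable f μT := by
  obtain ⟨C0, hC0⟩ := (isCompact_closedBall (0:E3) 9).exists_bound_of_continuousOn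
    hf.continuousOn
  refine Integrable.mono' (integrable_const C0) hf.aestronglyMeasurable ?_
  rw [μT]
  filter_upwards [ae_restrict_mem measurableSet_T3] with x hx
  exact hC0 _ (by rw [mem_closedBall_zero_iff]; linarith [norm_T3_le hx])

lemma memLp2_cont_T3 {F : Type*} [NormedAddCommGroup F] (f : E3 → F) (hf : Continuous f) :
    MemLp f 2 μT := by
  obtain ⟨C0, hC0⟩ := (isCompact_closedBall (0:E3) 9).exists_bound_of_continuousOn
    hf.continuousOn
  refine MemLp.of_bound hf.aestronglyMeasurable C0 ?_
  rw [μT]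
  filter_upwards [ae_restrict_mem measurableSet_T3] with x hx
  exact hC0 _ (by rw [mem_closedBall_zero_iff]; linarith [norm_T3_le hx])

end AvgAux


open AvgAux in
/-- **Average lemma.**
If `ρ ∈ L²(𝕋³)` has nonzero mean and the `C¹` vector field `u : 𝕋³ → ℝ³`
satisfies `∫ ρ u = 0`, then `|ū| ≤ (‖ρ − ρ̄‖_{L²} / |ρ̄|) ‖∇u‖_{L²}`. -/
theorem average_lemma
    (ρ : E3 → ℝ) (hρ : MemLp ρ 2 μT) (hρper : Torus3Periodic ρ)
    (hρbar : (∫ x in T3, ρ x) ≠ 0)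
    (u : E3 → E3) (hu : ContDiff ℝ 1 u) (huper : Torus3Periodic u)
    (hmom : (∫ x in T3, ρ x • u x) = 0) :
    ‖∫ x in T3, u x‖ ≤
      ((eLpNorm (fun x => ρ x - ∫ y in T3, ρ y) 2 μT).toReal / |∫ x in T3, ρ x|)
        * (eLpNorm (fun x => ‖fderiv ℝ u x‖) 2 μT).toReal := by
  have hcontu : Continuous u := hu.continuous
  have hcontD : Continuous (fderiv ℝ u) := hu.continuous_fderiv one_ne_zero
  set m : ℝ := ∫ x in T3, ρ x with hm
  set ub : E3 := ∫ x in T3, u x with hub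
  set v : E3 → E3 := fun x => u x - ub with hv
  have hcontv : Continuous v := hcontu.sub continuous_const
  have hρint : Integrable ρ μT := hρ.integrable one_le_two
  have huint : Integrable u μT := integrable_cont_T3 u hcontu
  have hμTint : ∀ {f : E3 → ℝ}, (∫ x, f x ∂μT) = ∫ x in T3, f x := fun {f} => by rw [μT]
  have hmμT : ∫ x, ρ x ∂μT = m := by rw [μT, hm]
  have hubμT : ∫ x, u x ∂μT = ub := by rw [μT, hub]
  -- the key identity
  have hid : ∫ x, (ρ x - m) • v x ∂μT = -(m • ub) := by
    have iρu : Integrable (fun x => ρ x • u x) μT := by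
      obtain ⟨Cu0, hCu0⟩ := (isCompact_closedBall (0:E3) 9).exists_bound_of_continuousOn
        hcontu.continuousOn
      refine Integrable.mono' (hρint.abs.const_mul Cu0)
        (hρ.1.smul hcontu.aestronglyMeasurable) ?_
      rw [μT]
      filter_upwards [ae_restrict_mem measurableSet_T3] with x hx
      rw [norm_smul, Real.norm_eq_abs, mul_comm]
      apply mul_le_mul_of_nonneg_right _ (abs_nonneg _)
      exact hCu0 _ (by rw [mem_closedBall_zero_iff]; linarith [norm_T3_le hx])
    have iρub : Integrable (fun x => ρ x • ub) μT := hρint.smul_const ub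
    have imu : Integrable (fun x => m • u x) μT := huint.smul m
    have e1 : ∀ x : E3, (ρ x - m) • v x = (ρ x • u x - ρ x • ub) - (m • u x - m • ub) := by
      intro x
      rw [hv]
      simp only [sub_smul, smul_sub]
      abel
    rw [integral_congr_ae (Filter.Eventually.of_forall e1)]
    have i1 : Integrable (fun x => ρ x • u x - ρ x • ub) μT := iρu.sub iρub
    have i2 : Integrable (fun x => m • u x - m • ub) μT := imu.sub (integrable_const _)
    rw [integral_sub i1 i2, integral_sub iρu iρub, integral_sub imu (integrable_const _),
      integral_smul, integral_smul_const, integral_const]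
    have h0 : ∫ x, ρ x • u x ∂μT = 0 := by rw [μT]; exact hmom
    rw [h0, hmμT, hubμT]
    simp [measure_univ]
  -- step (1): |m| ‖ub‖ ≤ ∫ |ρ - m| ‖v‖
  have hstep1 : |m| * ‖ub‖ ≤ ∫ x, |ρ x - m| * ‖v x‖ ∂μT := by
    have h1 : |m| * ‖ub‖ = ‖∫ x, (ρ x - m) • v x ∂μT‖ := by
      rw [hid, norm_neg, norm_smul, Real.norm_eq_abs]
    rw [h1]
    calc ‖∫ x, (ρ x - m) • v x ∂μT‖ ≤ ∫ x, ‖(ρ x - m) • v x‖ ∂μT :=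
        norm_integral_le_integral_norm _
      _ = ∫ x, |ρ x - m| * ‖v x‖ ∂μT := by
        apply integral_congr_ae
        filter_upwards with x
        rw [norm_smul, Real.norm_eq_abs]
  -- Hölder
  have hpq : (2:ℝ).HolderConjugate 2 := Real.HolderConjugate.two_two
  have hρm : MemLp (fun x => ρ x - m) 2 μT := hρ.sub (memLp_const m)
  have hvL2 : MemLp v 2 μT := memLp2_cont_T3 v hcontv
  have hf2 : MemLp (fun x => |ρ x - m|) (ENNReal.ofReal 2) μT := by
    rw [ENNReal.ofReal_ofNat]
    exact hρm.norm
  have hg2 : MemLp (fun x => ‖v x‖) (ENNReal.ofReal 2) μT := by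
    rw [ENNReal.ofReal_ofNat]
    exact hvL2.norm
  have holder : ∫ x, |ρ x - m| * ‖v x‖ ∂μT
      ≤ (∫ x, |ρ x - m| ^ (2:ℝ) ∂μT) ^ ((1:ℝ)/2) * (∫ x, ‖v x‖ ^ (2:ℝ) ∂μT) ^ ((1:ℝ)/2) :=
    integral_mul_le_Lp_mul_Lq_of_nonneg hpq
      (Filter.Eventually.of_forall fun x => abs_nonneg _)
      (Filter.Eventually.of_forall fun x => norm_nonneg _) hf2 hg2
  -- identify P
  have hP : (eLpNorm (fun x => ρ x - m) 2 μT).toReal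
      = (∫ x, |ρ x - m| ^ (2:ℝ) ∂μT) ^ ((1:ℝ)/2) := by
    rw [hρm.eLpNorm_eq_integral_rpow_norm two_ne_zero ENNReal.ofNat_ne_top]
    rw [ENNReal.toReal_ofReal (Real.rpow_nonneg
      (integral_nonneg fun x => Real.rpow_nonneg (norm_nonneg _) _) _)]
    norm_num
  have hD : (eLpNorm (fun x => ‖fderiv ℝ u x‖) 2 μT).toReal
      = (∫ x, ‖fderiv ℝ u x‖ ^ (2:ℝ) ∂μT) ^ ((1:ℝ)/2) := by
    have hDL2 : MemLp (fun x => ‖fderiv ℝ u x‖) 2 μT :=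
      memLp2_cont_T3 _ hcontD.norm
    rw [hDL2.eLpNorm_eq_integral_rpow_norm two_ne_zero ENNReal.ofNat_ne_top]
    rw [ENNReal.toReal_ofReal (Real.rpow_nonneg
      (integral_nonneg fun x => Real.rpow_nonneg (norm_nonneg _) _) _)]
    simp only [norm_norm]
    norm_num
  -- Poincaré: Q ≤ D
  have hcore : ∫ x, ‖v x‖ ^ (2:ℝ) ∂μT ≤ ∫ x, ‖fderiv ℝ u x‖ ^ (2:ℝ) ∂μT := by
    have h2 : ∀ r : ℝ, 0 ≤ r → r ^ (2:ℝ) = r ^ (2:ℕ) := fun r hr => by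
      rw [show ((2:ℝ)) = ((2:ℕ):ℝ) by norm_num, Real.rpow_natCast]
    calc ∫ x, ‖v x‖ ^ (2:ℝ) ∂μT = ∫ x, ‖v x‖ ^ (2:ℕ) ∂μT := by
          apply integral_congr_ae
          filter_upwards with x
          exact h2 _ (norm_nonneg _)
      _ ≤ ∫ x, ‖fderiv ℝ u x‖ ^ (2:ℕ) ∂μT := by
          have := poincare u hu huper
          simpa [hv, hub] using this
      _ = ∫ x, ‖fderiv ℝ u x‖ ^ (2:ℝ) ∂μT := by
          apply integral_congr_ae
          filter_upwards with x
          exact (h2 _ (norm_nonneg _)).symm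
  have hQD : (∫ x, ‖v x‖ ^ (2:ℝ) ∂μT) ^ ((1:ℝ)/2)
      ≤ (∫ x, ‖fderiv ℝ u x‖ ^ (2:ℝ) ∂μT) ^ ((1:ℝ)/2) :=
    Real.rpow_le_rpow (integral_nonneg fun x => Real.rpow_nonneg (norm_nonneg _) _)
      hcore (by norm_num)
  -- assemble
  set P := (eLpNorm (fun x => ρ x - m) 2 μT).toReal with hPdef
  set D := (eLpNorm (fun x => ‖fderiv ℝ u x‖) 2 μT).toReal with hDdef
  have hPnn : 0 ≤ P := ENNReal.toReal_nonneg
  have hchain : |m| * ‖ub‖ ≤ P * D := by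
    calc |m| * ‖ub‖ ≤ ∫ x, |ρ x - m| * ‖v x‖ ∂μT := hstep1
      _ ≤ (∫ x, |ρ x - m| ^ (2:ℝ) ∂μT) ^ ((1:ℝ)/2)
            * (∫ x, ‖v x‖ ^ (2:ℝ) ∂μT) ^ ((1:ℝ)/2) := holder
      _ ≤ (∫ x, |ρ x - m| ^ (2:ℝ) ∂μT) ^ ((1:ℝ)/2)
            * (∫ x, ‖fderiv ℝ u x‖ ^ (2:ℝ) ∂μT) ^ ((1:ℝ)/2) := by
          apply mul_le_mul_of_nonneg_left hQD
          exact Real.rpow_nonneg (integral_nonneg fun x => Real.rpow_nonneg (abs_nonneg _) _) _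
      _ = P * D := by rw [hP, hD]
  have habs : 0 < |m| := abs_pos.mpr hρbar
  rw [div_mul_eq_mul_div, le_div_iff₀ habs]
  calc ‖ub‖ * |m| = |m| * ‖ub‖ := mul_comm _ _
    _ ≤ P * D := hchain
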